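/- Let α > 1 with α ≤ 1 + 1/α, let 1/2 ≤ r ≤ 1, and let C be a Bernoulli random variable with P(C=1)=r. Then for any event M (with complement M=2): P(M=1,C=1) + α·P(M=2,C=2) + P(M=1)/α ≤ 1 + 1/α. -/

import Mathlib

open MeasureTheory

/-- Bound C_c + C_b/α ≤ 1 + 1/α in the GBM analysis. -/
theorem gbm_bound_Cc_Cb {Ω : Type*} [MeasurableSpace Ω]
    (μ : Measure Ω) [IsProbabilityMeasure μ]
    (α r : ℝ) (hα1 : 1 < α) (hαg : α ≤ 1 + 1/α) (hr : 1/2 ≤ r) (hr1 : r ≤ 1)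
    (M C : Set Ω) (hM : MeasurableSet M) (hC : MeasurableSet C)
    (hPC : (μ C).toReal = r) :
    (μ (M ∩ C)).toReal + α * (μ (Mᶜ ∩ Cᶜ)).toReal + (μ M).toReal / α
      ≤ 1 + 1/α := by
  have hα0 : (0:ℝ) < α := lt_trans one_pos hα1
  set a := (μ (M ∩ C)).toReal with ha
  set b := (μ (Mᶜ ∩ Cᶜ)).toReal with hb
  set m := (μ M).toReal with hm
  have hmc : (μ Mᶜ).toReal = 1 - m := by
    rw [prob_compl_eq_one_sub hM,
      ENNReal.toReal_sub_of_le prob_le_one ENNReal.one_ne_top]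
    simp [hm]
  have ham : a ≤ m := ENNReal.toReal_mono (measure_ne_top μ M)
    (measure_mono Set.inter_subset_left)
  have har : a ≤ r := by
    rw [← hPC]
    exact ENNReal.toReal_mono (measure_ne_top μ C) (measure_mono Set.inter_subset_right)
  have hbm : b ≤ 1 - m := by
    rw [← hmc]
    exact ENNReal.toReal_mono (measure_ne_top μ Mᶜ) (measure_mono Set.inter_subset_left)
  have hm1 : m ≤ 1 := by
    have := prob_le_one (μ := μ) (s := M)
    simpa [hm] using ENNReal.toReal_mono (by simp) this
  have hβ : α * (1/α) = 1 := by field_simp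
  have hβ0 : 0 < 1/α := by positivity
  have ha0 : 0 ≤ a := ENNReal.toReal_nonneg
  rw [div_eq_mul_one_div]
  rcases le_or_gt m r with h | h
  · nlinarith [mul_nonneg (sub_nonneg.2 hm1) (sub_nonneg.2 hαg)]
  · nlinarith [mul_nonneg (sub_nonneg.2 hr1) (sub_nonneg.2 hαg),
      mul_nonneg (sub_nonneg.2 h.le) (sub_nonneg.2 ((by rw [div_lt_one hα0]; exact hα1 : (1:ℝ)/α < 1).le.trans hα1.le : 1/α ≤ α))]
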